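/- Let 0 < S₀ ≤ S₁, let 0 ≤ x₀ < x₁ ≤ 1, and let q > 0. Define S : [0,1] → ℝ by S(x) = S₀ on [0,x₀], S(x) = q/(1−x) on (x₀,x₁), and S(x) = S₁ on [x₁,1], and assume S is non-decreasing with S₀ ≤ S(x) ≤ S₁. If S maximizes F[·] := (1/2)(∫₀¹ · dx)² / ∫₀¹ (1−x)(·)² dx over all measurable functions on [0,1] with values in [S₀,S₁], then S is continuous at x₀ and at x₁; that is, q = (1−x₀)·S₀ and q = (1−x₁)·S₁, so x₀ = 1 − q/S₀ and x₁ = 1 − q/S₁. -/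

import Mathlib

open MeasureTheory intervalIntegral

/-- The functional `F[S] = (1/2)(∫₀¹ S dx)² / ∫₀¹ (1−x) S² dx`. -/
noncomputable def coolingFunctional (S : ℝ → ℝ) : ℝ :=
  (1/2) * (∫ x in (0:ℝ)..1, S x)^2 / ∫ x in (0:ℝ)..1, (1 - x) * (S x)^2

lemma small_eps {c K e1 : ℝ} (he1 : 0 < e1)
    (h : ∀ e : ℝ, 0 < e → e ≤ e1 → c ≤ e * K) : c ≤ 0 := by
  by_contra hc
  push_neg at hc
  have hK : (0:ℝ) < |K| + 1 := by positivity
  set e := min e1 (c / (2 * (|K| + 1))) with he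
  have hepos : 0 < e := lt_min he1 (by positivity)
  have h1 := h e hepos (min_le_left _ _)
  have h2 : e * K ≤ e * |K| := mul_le_mul_of_nonneg_left (le_abs_self K) hepos.le
  have h3 : e * |K| ≤ (c / (2 * (|K| + 1))) * (|K| + 1) :=
    mul_le_mul (min_le_right _ _) (by linarith [abs_nonneg K]) (abs_nonneg K) (by positivity)
  have h4 : (c / (2 * (|K| + 1))) * (|K| + 1) = c / 2 := by field_simp
  linarith

lemma intInt_of_bounded {f : ℝ → ℝ} (hf : Measurable f) {C : ℝ}
    (hC : ∀ x ∈ Set.Icc (0:ℝ) 1, |f x| ≤ C) {a b : ℝ}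
    (ha : 0 ≤ a) (hab : a ≤ b) (hb : b ≤ 1) :
    IntervalIntegrable f volume a b := by
  rw [intervalIntegrable_iff_integrableOn_Ioc_of_le hab]
  apply MeasureTheory.Integrable.mono' (integrable_const C) (hf.aestronglyMeasurable.restrict)
  rw [ae_restrict_iff' measurableSet_Ioc]
  filter_upwards with x hx
  rw [Real.norm_eq_abs]
  exact hC x ⟨le_trans ha hx.1.le, le_trans hx.2 hb⟩

lemma integral_one_sub (a b : ℝ) :
    ∫ x in a..b, (1 - x) = (b - a) * (1 - (a + b) / 2) := by
  have h1 : IntervalIntegrable (fun _ : ℝ => (1:ℝ)) volume a b := intervalIntegrable_const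
  have h2 : IntervalIntegrable (fun x : ℝ => x) volume a b := intervalIntegral.intervalIntegrable_id
  have := intervalIntegral.integral_sub h1 h2
  rw [show (fun x:ℝ => 1 - x) = fun x:ℝ => (fun _ => (1:ℝ)) x - (fun y:ℝ => y) x from rfl, this,
    intervalIntegral.integral_const, integral_id]
  simp only [smul_eq_mul, mul_one]; ring

lemma ae_ne (v : ℝ) : ∀ᵐ (x : ℝ), x ≠ v := by
  have hs : ({v} : Set ℝ) = {x : ℝ | ¬ x ≠ v} := by ext y; simp
  rw [ae_iff, ← hs]
  exact measure_singleton v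


lemma key_ineq (S₀ S₁ : ℝ) (hS₀ : 0 < S₀) (hS₁ : S₀ ≤ S₁) (base : ℝ → ℝ)
    (hmeas : Measurable base)
    (hbd : ∀ x ∈ Set.Icc (0:ℝ) 1, S₀ ≤ base x ∧ base x ≤ S₁)
    (u v e1 σ : ℝ) (h0u : 0 ≤ u) (huv : u < v) (hv1 : v ≤ 1) (he1 : 0 < e1)
    (hσ : σ = 1 ∨ σ = -1)
    (hadm : ∀ e : ℝ, 0 < e → e ≤ e1 → ∀ x ∈ Set.Ioo u v,
      S₀ ≤ base x + σ * e ∧ base x + σ * e ≤ S₁)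
    (hmax : ∀ e : ℝ, 0 < e → e ≤ e1 →
      coolingFunctional (fun x => if x ∈ Set.Ioo u v then base x + σ * e else base x)
        ≤ coolingFunctional base) :
    σ * ((v - u) * ∫ x in (0:ℝ)..1, (1 - x) * (base x)^2) ≤
      σ * ((∫ x in (0:ℝ)..1, base x) * ∫ x in u..v, (1 - x) * base x) := by
  have hσ2 : σ * σ = 1 := by rcases hσ with rfl | rfl <;> norm_num
  set N := ∫ x in (0:ℝ)..1, base x with hNdef
  set D := ∫ x in (0:ℝ)..1, (1 - x) * (base x)^2 with hDdef
  set M := ∫ x in u..v, (1 - x) * base x with hMdef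
  set J := ∫ x in u..v, (1 - x) with hJdef
  set ℓ := v - u with hl
  have hlpos : 0 < ℓ := by rw [hl]; linarith
  clear_value N D M J ℓ
  have habs : ∀ x ∈ Set.Icc (0:ℝ) 1, |base x| ≤ S₁ := by
    intro x hx
    rcases hbd x hx with ⟨h1, h2⟩
    rw [abs_le]; constructor <;> linarith
  have hib : ∀ a b : ℝ, 0 ≤ a → a ≤ b → b ≤ 1 → IntervalIntegrable base volume a b :=
    fun a b ha hab hb => intInt_of_bounded hmeas habs ha hab hb
  have hDmeas : Measurable (fun x : ℝ => (1 - x) * (base x)^2) :=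
    (measurable_const.sub measurable_id).mul (hmeas.pow_const 2)
  have hDabs : ∀ x ∈ Set.Icc (0:ℝ) 1, |(1 - x) * (base x)^2| ≤ S₁^2 := by
    intro x hx
    rcases hx with ⟨hx0, hx1⟩
    rw [abs_mul, abs_of_nonneg (by linarith : (0:ℝ) ≤ 1 - x)]
    have h1 : |(base x)^2| ≤ S₁^2 := by
      rw [abs_pow]
      exact pow_le_pow_left₀ (abs_nonneg _) (habs x ⟨hx0, hx1⟩) 2
    nlinarith [abs_nonneg ((base x)^2)]
  have hibD : ∀ a b : ℝ, 0 ≤ a → a ≤ b → b ≤ 1 →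
      IntervalIntegrable (fun x : ℝ => (1 - x) * (base x)^2) volume a b :=
    fun a b ha hab hb => intInt_of_bounded hDmeas hDabs ha hab hb
  -- positivity of N and D
  have hNpos : 0 < N := by
    have h1 : ∫ x in (0:ℝ)..1, S₀ ≤ N := by
      rw [hNdef]
      apply intervalIntegral.integral_mono_on zero_le_one intervalIntegrable_const
        (hib 0 1 le_rfl zero_le_one le_rfl)
      intro x hx; exact (hbd x hx).1
    simp only [intervalIntegral.integral_const, smul_eq_mul, sub_zero, one_mul] at h1
    linarith
  have hDpos : 0 < D := by
    have h1 : ∫ x in (0:ℝ)..1, (1 - x) * S₀^2 ≤ D := by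
      rw [hDdef]
      apply intervalIntegral.integral_mono_on zero_le_one
        (by apply ContinuousOn.intervalIntegrable; fun_prop)
        (hibD 0 1 le_rfl zero_le_one le_rfl)
      intro x hx
      rcases hbd x hx with ⟨hb1, _⟩
      have hx1 : (0:ℝ) ≤ 1 - x := by linarith [hx.2]
      have hsq : S₀^2 ≤ (base x)^2 := by nlinarith
      exact mul_le_mul_of_nonneg_left hsq hx1
    have h2 : ∫ x in (0:ℝ)..1, (1 - x) * S₀^2 = S₀^2 / 2 := by
      rw [intervalIntegral.integral_mul_const, integral_one_sub]
      ring
    have h3 : 0 < S₀^2 / 2 := by positivity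
    linarith
  -- for each small e, the polynomial inequality
  have hkey : ∀ e : ℝ, 0 < e → e ≤ e1 →
      σ * (2 * ℓ * N * D) - σ * (2 * M * N^2) ≤ e * (J * N^2 - ℓ^2 * D) := by
    intro e he he'
    set T := fun x => if x ∈ Set.Ioo u v then base x + σ * e else base x with hTdef
    clear_value T
    have hTmeas : Measurable T := by
      rw [hTdef]
      exact Measurable.ite measurableSet_Ioo (by fun_prop) hmeas
    have hTbd : ∀ x ∈ Set.Icc (0:ℝ) 1, S₀ ≤ T x ∧ T x ≤ S₁ := by
      intro x hx
      by_cases hxi : x ∈ Set.Ioo u v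
      · simp only [hTdef, hxi, if_pos]
        exact hadm e he he' x hxi
      · simp only [hTdef, hxi, if_neg, not_false_iff]
        exact hbd x hx
    have hTabs : ∀ x ∈ Set.Icc (0:ℝ) 1, |T x| ≤ S₁ := by
      intro x hx
      rcases hTbd x hx with ⟨h1, h2⟩
      rw [abs_le]; constructor <;> linarith
    have hibT : ∀ a b : ℝ, 0 ≤ a → a ≤ b → b ≤ 1 → IntervalIntegrable T volume a b :=
      fun a b ha hab hb => intInt_of_bounded hTmeas hTabs ha hab hb
    have hDTmeas : Measurable (fun x : ℝ => (1 - x) * (T x)^2) :=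
      (measurable_const.sub measurable_id).mul (hTmeas.pow_const 2)
    have hDTabs : ∀ x ∈ Set.Icc (0:ℝ) 1, |(1 - x) * (T x)^2| ≤ S₁^2 := by
      intro x hx
      rcases hx with ⟨hx0, hx1⟩
      rw [abs_mul, abs_of_nonneg (by linarith : (0:ℝ) ≤ 1 - x)]
      have h1 : |(T x)^2| ≤ S₁^2 := by
        rw [abs_pow]
        exact pow_le_pow_left₀ (abs_nonneg _) (hTabs x ⟨hx0, hx1⟩) 2
      nlinarith [abs_nonneg ((T x)^2)]
    have hibDT : ∀ a b : ℝ, 0 ≤ a → a ≤ b → b ≤ 1 →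
        IntervalIntegrable (fun x : ℝ => (1 - x) * (T x)^2) volume a b :=
      fun a b ha hab hb => intInt_of_bounded hDTmeas hDTabs ha hab hb
    -- numerator integral of T
    have hNT : ∫ x in (0:ℝ)..1, T x = N + σ * e * ℓ := by
      have hd : ∀ x : ℝ, T x - base x = (if x ∈ Set.Ioo u v then σ * e else 0) := by
        intro x; simp only [hTdef]; split_ifs <;> ring
      have hdm : Measurable (fun x : ℝ => T x - base x) := hTmeas.sub hmeas
      have hdabs : ∀ x ∈ Set.Icc (0:ℝ) 1, |T x - base x| ≤ 2 * S₁ := by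
        intro x hx
        have := habs x hx; have := hTabs x hx
        calc |T x - base x| ≤ |T x| + |base x| := abs_sub _ _
          _ ≤ 2 * S₁ := by linarith
      have hibd : ∀ a b : ℝ, 0 ≤ a → a ≤ b → b ≤ 1 →
          IntervalIntegrable (fun x => T x - base x) volume a b :=
        fun a b ha hab hb => intInt_of_bounded hdm hdabs ha hab hb
      have h1 : ∫ x in (0:ℝ)..1, T x = N + ∫ x in (0:ℝ)..1, (T x - base x) := by
        rw [hNdef, ← intervalIntegral.integral_add (hib 0 1 le_rfl zero_le_one le_rfl)
          (hibd 0 1 le_rfl zero_le_one le_rfl)]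
        congr 1; ext x; ring
      have h2 : ∫ x in (0:ℝ)..u, (T x - base x) = 0 := by
        rw [intervalIntegral.integral_congr (g := fun _ => (0:ℝ)), intervalIntegral.integral_zero]
        intro x hx
        rw [Set.uIcc_of_le h0u] at hx
        have : x ∉ Set.Ioo u v := fun hc => absurd hx.2 (not_le.mpr hc.1)
        simp [hd x, this]
      have h3 : ∫ x in v..(1:ℝ), (T x - base x) = 0 := by
        rw [intervalIntegral.integral_congr (g := fun _ => (0:ℝ)), intervalIntegral.integral_zero]
        intro x hx
        rw [Set.uIcc_of_le hv1] at hx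
        have : x ∉ Set.Ioo u v := fun hc => absurd hx.1 (not_le.mpr hc.2)
        simp [hd x, this]
      have h4 : ∫ x in u..v, (T x - base x) = σ * e * ℓ := by
        have hcongr : ∫ x in u..v, (T x - base x) = ∫ x in u..v, σ * e := by
          apply intervalIntegral.integral_congr_ae
          filter_upwards [ae_ne v] with x hxv hx
          rw [Set.uIoc_of_le huv.le] at hx
          have hxi : x ∈ Set.Ioo u v := ⟨hx.1, lt_of_le_of_ne hx.2 hxv⟩
          simp [hd x, hxi]
        rw [hcongr, intervalIntegral.integral_const, smul_eq_mul, hl]; ring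
      have h5 : ∫ x in (0:ℝ)..1, (T x - base x) = σ * e * ℓ := by
        rw [← intervalIntegral.integral_add_adjacent_intervals
            (hibd 0 u le_rfl h0u (by linarith)) (hibd u 1 h0u (by linarith) le_rfl),
          ← intervalIntegral.integral_add_adjacent_intervals
            (hibd u v h0u huv.le hv1) (hibd v 1 (by linarith) hv1 le_rfl), h2, h3, h4]
        ring
      rw [h1, h5]
    -- denominator integral of T
    have hDT : ∫ x in (0:ℝ)..1, (1 - x) * (T x)^2 = D + 2 * σ * e * M + e^2 * J := by
      set W := fun x : ℝ => (1 - x) * (T x)^2 - (1 - x) * (base x)^2 with hWdef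
      clear_value W
      have hWm : Measurable W := by rw [hWdef]; exact hDTmeas.sub hDmeas
      have hWabs : ∀ x ∈ Set.Icc (0:ℝ) 1, |W x| ≤ 2 * S₁^2 := by
        intro x hx
        have := hDabs x hx; have := hDTabs x hx
        calc |W x| = |(1 - x) * (T x)^2 - (1 - x) * (base x)^2| := by rw [hWdef]
          _ ≤ |(1 - x) * (T x)^2| + |(1 - x) * (base x)^2| := abs_sub _ _
          _ ≤ 2 * S₁^2 := by linarith
      have hibW : ∀ a b : ℝ, 0 ≤ a → a ≤ b → b ≤ 1 →
          IntervalIntegrable W volume a b :=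
        fun a b ha hab hb => intInt_of_bounded hWm hWabs ha hab hb
      have h1 : ∫ x in (0:ℝ)..1, (1 - x) * (T x)^2 = D + ∫ x in (0:ℝ)..1, W x := by
        rw [hDdef, ← intervalIntegral.integral_add (hibD 0 1 le_rfl zero_le_one le_rfl)
          (hibW 0 1 le_rfl zero_le_one le_rfl)]
        congr 1; ext x; simp only [hWdef]; ring
      have hW0 : ∀ x, x ∉ Set.Ioo u v → W x = 0 := by
        intro x hxi; simp only [hWdef, hTdef, if_neg hxi, sub_self]
      have h2 : ∫ x in (0:ℝ)..u, W x = 0 := by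
        rw [intervalIntegral.integral_congr (g := fun _ => (0:ℝ)), intervalIntegral.integral_zero]
        intro x hx
        rw [Set.uIcc_of_le h0u] at hx
        exact hW0 x (fun hc => absurd hx.2 (not_le.mpr hc.1))
      have h3 : ∫ x in v..(1:ℝ), W x = 0 := by
        rw [intervalIntegral.integral_congr (g := fun _ => (0:ℝ)), intervalIntegral.integral_zero]
        intro x hx
        rw [Set.uIcc_of_le hv1] at hx
        exact hW0 x (fun hc => absurd hx.1 (not_le.mpr hc.2))
      have hibM' : IntervalIntegrable (fun x : ℝ => (1 - x) * base x) volume u v := by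
        apply intInt_of_bounded (by fun_prop) (C := S₁) _ h0u huv.le hv1
        intro x hx
        rw [abs_mul, abs_of_nonneg (by linarith [hx.2] : (0:ℝ) ≤ 1 - x)]
        have := habs x hx
        nlinarith [abs_nonneg (base x), hx.1]
      have h4 : ∫ x in u..v, W x = 2 * σ * e * M + e^2 * J := by
        have hcongr : ∫ x in u..v, W x
            = ∫ x in u..v, (2 * σ * e * ((1 - x) * base x) + e^2 * (1 - x)) := by
          apply intervalIntegral.integral_congr_ae
          filter_upwards [ae_ne v] with x hxv hx
          rw [Set.uIoc_of_le huv.le] at hx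
          have hxi : x ∈ Set.Ioo u v := ⟨hx.1, lt_of_le_of_ne hx.2 hxv⟩
          simp only [hWdef, hTdef, if_pos hxi]
          linear_combination (e^2 * (1 - x)) * hσ2
        rw [hcongr, intervalIntegral.integral_add
            ((hibM'.const_mul _)) ((by apply ContinuousOn.intervalIntegrable; fun_prop :
              IntervalIntegrable (fun x : ℝ => (1 - x)) volume u v).const_mul _),
          intervalIntegral.integral_const_mul, intervalIntegral.integral_const_mul,
          ← hMdef, ← hJdef]
      have h5 : ∫ x in (0:ℝ)..1, W x = 2 * σ * e * M + e^2 * J := by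
        rw [← intervalIntegral.integral_add_adjacent_intervals
            (hibW 0 u le_rfl h0u (by linarith)) (hibW u 1 h0u (by linarith) le_rfl),
          ← intervalIntegral.integral_add_adjacent_intervals
            (hibW u v h0u huv.le hv1) (hibW v 1 (by linarith) hv1 le_rfl), h2, h3, h4]
        ring
      rw [h1, h5]; ring
    -- positivity of perturbed denominator
    have hDTpos : 0 < D + 2 * σ * e * M + e^2 * J := by
      rw [← hDT]
      have h1 : ∫ x in (0:ℝ)..1, (1 - x) * S₀^2 ≤ ∫ x in (0:ℝ)..1, (1 - x) * (T x)^2 := by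
        apply intervalIntegral.integral_mono_on zero_le_one
          (by apply ContinuousOn.intervalIntegrable; fun_prop)
          (hibDT 0 1 le_rfl zero_le_one le_rfl)
        intro x hx
        rcases hTbd x hx with ⟨hb1, _⟩
        have hx1 : (0:ℝ) ≤ 1 - x := by linarith [hx.2]
        have hsq : S₀^2 ≤ (T x)^2 := by nlinarith
        exact mul_le_mul_of_nonneg_left hsq hx1
      have h2 : ∫ x in (0:ℝ)..1, (1 - x) * S₀^2 = S₀^2 / 2 := by
        rw [intervalIntegral.integral_mul_const, integral_one_sub]
        ring
      rw [h2] at h1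
      have h3 : 0 < S₀^2 / 2 := by positivity
      linarith
    -- the maximality inequality
    have hFT := hmax e he he'
    rw [← hTdef] at hFT
    simp only [coolingFunctional] at hFT
    rw [hNT, hDT, ← hNdef, ← hDdef] at hFT
    rw [div_le_div_iff₀ hDTpos hDpos] at hFT
    have hexp : (N + σ * e * ℓ)^2 = N^2 + 2 * σ * e * ℓ * N + e^2 * ℓ^2 := by
      rcases hσ with rfl | rfl <;> ring
    rw [hexp] at hFT
    have hbig : e * (σ * (2 * ℓ * N * D) - σ * (2 * M * N^2))
        ≤ e * (e * (J * N^2 - ℓ^2 * D)) := by linarith [hFT]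
    have := (mul_le_mul_iff_right₀ he).mp hbig
    linarith [this]
  have hconc := small_eps he1 hkey
  nlinarith [hconc, hNpos]

lemma integral_inv_one_sub' {b : ℝ} (hb : b < 1) :
    ∫ x in (0:ℝ)..b, (1 - x)⁻¹ = Real.log (1 / (1 - b)) := by
  have h := intervalIntegral.integral_comp_sub_left (a := (0:ℝ)) (b := b) (fun y : ℝ => y⁻¹) 1
  simp only [sub_zero] at h
  rw [h, integral_inv (by
    intro hmem
    rw [Set.mem_uIcc] at hmem
    rcases hmem with ⟨h1, _⟩ | ⟨_, h2⟩ <;> linarith)]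

/-- The continuous profile with junction value `c` at the left. -/
noncomputable def auxP (S₁ c : ℝ) : ℝ → ℝ := fun x => if x < 1 - c / S₁ then c / (1 - x) else S₁

lemma auxP_meas (S₁ c : ℝ) : Measurable (auxP S₁ c) := by
  apply Measurable.ite (measurableSet_Iio (a := 1 - c / S₁))
  · exact measurable_const.div (measurable_const.sub measurable_id)
  · exact measurable_const

lemma auxP_bd (S₁ c : ℝ) (hc : 0 < c) (hcS : c ≤ S₁) :
    ∀ x ∈ Set.Icc (0:ℝ) 1, c ≤ auxP S₁ c x ∧ auxP S₁ c x ≤ S₁ := by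
  intro x hx
  have hS₁ : 0 < S₁ := lt_of_lt_of_le hc hcS
  have hr : 0 < c / S₁ := div_pos hc hS₁
  unfold auxP
  by_cases hxl : x < 1 - c / S₁
  · rw [if_pos hxl]
    have h1 : c / S₁ < 1 - x := by linarith
    have h2 : 0 < 1 - x := lt_trans hr h1
    constructor
    · rw [le_div_iff₀ h2]
      nlinarith [hx.1]
    · rw [div_le_iff₀ h2, mul_comm]
      rw [div_lt_iff₀ hS₁] at h1
      linarith
  · rw [if_neg hxl]
    exact ⟨hcS, le_rfl⟩

lemma auxP_integrals (S₁ c : ℝ) (hc : 0 < c) (hcS : c ≤ S₁) :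
    (∫ x in (0:ℝ)..1, auxP S₁ c x) = c * (Real.log (S₁ / c) + 1) ∧
    (∫ x in (0:ℝ)..1, (1 - x) * (auxP S₁ c x)^2) = c^2 * (Real.log (S₁ / c) + 1/2) := by
  have hS₁ : 0 < S₁ := lt_of_lt_of_le hc hcS
  set x1 := 1 - c / S₁ with hx1def
  have hr : 0 < c / S₁ := div_pos hc hS₁
  have hr1 : c / S₁ ≤ 1 := (div_le_one hS₁).mpr hcS
  have hx1a : 0 ≤ x1 := by rw [hx1def]; linarith
  have hx1b : x1 < 1 := by rw [hx1def]; linarith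
  have h1mx1 : 1 - x1 = c / S₁ := by rw [hx1def]; ring
  have habs : ∀ x ∈ Set.Icc (0:ℝ) 1, |auxP S₁ c x| ≤ S₁ := by
    intro x hx
    rcases auxP_bd S₁ c hc hcS x hx with ⟨h1, h2⟩
    rw [abs_le]; constructor <;> linarith
  have hDabs : ∀ x ∈ Set.Icc (0:ℝ) 1, |(1 - x) * (auxP S₁ c x)^2| ≤ S₁^2 := by
    intro x hx
    obtain ⟨hxa, hxb⟩ := hx
    rw [abs_mul, abs_of_nonneg (by linarith : (0:ℝ) ≤ 1 - x)]
    have h1 : |(auxP S₁ c x)^2| ≤ S₁^2 := by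
      rw [abs_pow]
      exact pow_le_pow_left₀ (abs_nonneg _) (habs x ⟨hxa, hxb⟩) 2
    nlinarith [abs_nonneg ((auxP S₁ c x)^2)]
  have hibP : ∀ a b : ℝ, 0 ≤ a → a ≤ b → b ≤ 1 → IntervalIntegrable (auxP S₁ c) volume a b :=
    fun a b ha hab hb => intInt_of_bounded (auxP_meas S₁ c) habs ha hab hb
  have hDmeas : Measurable (fun x : ℝ => (1 - x) * (auxP S₁ c x)^2) :=
    (measurable_const.sub measurable_id).mul ((auxP_meas S₁ c).pow_const 2)
  have hibD : ∀ a b : ℝ, 0 ≤ a → a ≤ b → b ≤ 1 →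
      IntervalIntegrable (fun x : ℝ => (1 - x) * (auxP S₁ c x)^2) volume a b :=
    fun a b ha hab hb => intInt_of_bounded hDmeas hDabs ha hab hb
  have hlog : Real.log (1 / (1 - x1)) = Real.log (S₁ / c) := by
    rw [h1mx1, one_div_div]
  constructor
  · -- numerator
    have hsplit : ∫ x in (0:ℝ)..1, auxP S₁ c x
        = (∫ x in (0:ℝ)..x1, auxP S₁ c x) + ∫ x in x1..(1:ℝ), auxP S₁ c x :=
      (intervalIntegral.integral_add_adjacent_intervals
        (hibP 0 x1 le_rfl hx1a hx1b.le) (hibP x1 1 hx1a hx1b.le le_rfl)).symm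
    have h1 : ∫ x in (0:ℝ)..x1, auxP S₁ c x = ∫ x in (0:ℝ)..x1, c * (1 - x)⁻¹ := by
      apply intervalIntegral.integral_congr
      intro x hx
      rw [Set.uIcc_of_le hx1a] at hx
      unfold auxP
      simp only [hx1def]
      by_cases hxl : x < 1 - c / S₁
      · rw [if_pos hxl, div_eq_mul_inv]
      · have hxe : x = 1 - c / S₁ := le_antisymm (hx1def ▸ hx.2) (not_lt.mp hxl)
        rw [if_neg hxl, hxe, show (1:ℝ) - (1 - c/S₁) = c/S₁ by ring, inv_div]
        field_simp
    have h1' : ∫ x in (0:ℝ)..x1, c * (1 - x)⁻¹ = c * Real.log (S₁ / c) := by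
      rw [intervalIntegral.integral_const_mul, integral_inv_one_sub' hx1b, hlog]
    have h2 : ∫ x in x1..(1:ℝ), auxP S₁ c x = ∫ x in x1..(1:ℝ), S₁ := by
      apply intervalIntegral.integral_congr
      intro x hx
      rw [Set.uIcc_of_le hx1b.le] at hx
      unfold auxP
      rw [if_neg (by rw [← hx1def]; exact not_lt.mpr hx.1)]
    rw [hsplit, h1, h1', h2, intervalIntegral.integral_const, smul_eq_mul, h1mx1]
    field_simp
  · -- denominator
    have hsplit : ∫ x in (0:ℝ)..1, (1 - x) * (auxP S₁ c x)^2
        = (∫ x in (0:ℝ)..x1, (1 - x) * (auxP S₁ c x)^2)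
          + ∫ x in x1..(1:ℝ), (1 - x) * (auxP S₁ c x)^2 :=
      (intervalIntegral.integral_add_adjacent_intervals
        (hibD 0 x1 le_rfl hx1a hx1b.le) (hibD x1 1 hx1a hx1b.le le_rfl)).symm
    have h1 : ∫ x in (0:ℝ)..x1, (1 - x) * (auxP S₁ c x)^2
        = ∫ x in (0:ℝ)..x1, c^2 * (1 - x)⁻¹ := by
      apply intervalIntegral.integral_congr
      intro x hx
      rw [Set.uIcc_of_le hx1a] at hx
      unfold auxP
      simp only [hx1def]
      by_cases hxl : x < 1 - c / S₁
      · rw [if_pos hxl]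
        have hne : 0 < 1 - x := by
          have : x < 1 := lt_of_lt_of_le hxl (by linarith)
          linarith
        field_simp
      · have hxe : x = 1 - c / S₁ := le_antisymm (hx1def ▸ hx.2) (not_lt.mp hxl)
        rw [if_neg hxl, hxe, show (1:ℝ) - (1 - c/S₁) = c/S₁ by ring, inv_div]
        field_simp
    have h1' : ∫ x in (0:ℝ)..x1, c^2 * (1 - x)⁻¹ = c^2 * Real.log (S₁ / c) := by
      rw [intervalIntegral.integral_const_mul, integral_inv_one_sub' hx1b, hlog]
    have h2 : ∫ x in x1..(1:ℝ), (1 - x) * (auxP S₁ c x)^2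
        = ∫ x in x1..(1:ℝ), (1 - x) * S₁^2 := by
      apply intervalIntegral.integral_congr
      intro x hx
      rw [Set.uIcc_of_le hx1b.le] at hx
      simp only [auxP]
      rw [if_neg (not_lt.mpr hx.1)]
    have h2' : ∫ x in x1..(1:ℝ), (1 - x) * S₁^2 = c^2 / 2 := by
      rw [intervalIntegral.integral_mul_const, integral_one_sub]
      have hx1e : (1:ℝ) - x1 = c / S₁ := h1mx1
      have : ((1:ℝ) - x1) * (1 - (x1 + 1)/2) = (c/S₁)^2 / 2 := by
        rw [show (1:ℝ) - (x1+1)/2 = (1 - x1)/2 by ring, hx1e]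
        ring
      rw [this]
      field_simp
    rw [hsplit, h1, h1', h2, h2']
    ring


lemma key_ineq' (S₀ S₁ : ℝ) (hS₀ : 0 < S₀) (hS₁ : S₀ ≤ S₁) (base : ℝ → ℝ)
    (hmeas : Measurable base)
    (hbd : ∀ x ∈ Set.Icc (0:ℝ) 1, S₀ ≤ base x ∧ base x ≤ S₁)
    (u v e1 σ : ℝ) (h0u : 0 ≤ u) (huv : u < v) (hv1 : v ≤ 1) (he1 : 0 < e1)
    (hσ : σ = 1 ∨ σ = -1)
    (hadm : ∀ e : ℝ, 0 < e → e ≤ e1 → ∀ x ∈ Set.Ioo u v,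
      S₀ ≤ base x + σ * e ∧ base x + σ * e ≤ S₁)
    (hmax : ∀ T : ℝ → ℝ, Measurable T →
      (∀ x ∈ Set.Icc (0:ℝ) 1, S₀ ≤ T x ∧ T x ≤ S₁) →
      coolingFunctional T ≤ coolingFunctional base) :
    σ * ((v - u) * ∫ x in (0:ℝ)..1, (1 - x) * (base x)^2) ≤
      σ * ((∫ x in (0:ℝ)..1, base x) * ∫ x in u..v, (1 - x) * base x) := by
  apply key_ineq S₀ S₁ hS₀ hS₁ base hmeas hbd u v e1 σ h0u huv hv1 he1 hσ hadm
  intro e he he'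
  apply hmax
  · exact Measurable.ite measurableSet_Ioo (by fun_prop) hmeas
  · intro x hx
    beta_reduce
    split_ifs with h
    · exact hadm e he he' x h
    · exact hbd x hx

lemma cooling_N_lb (S₀ S₁ : ℝ) (f : ℝ → ℝ) (hmeas : Measurable f)
    (hbd : ∀ x ∈ Set.Icc (0:ℝ) 1, S₀ ≤ f x ∧ f x ≤ S₁) :
    S₀ ≤ ∫ x in (0:ℝ)..1, f x := by
  have habs : ∀ x ∈ Set.Icc (0:ℝ) 1, |f x| ≤ max S₁ (-S₀) := by
    intro x hx
    rcases hbd x hx with ⟨h1, h2⟩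
    rw [abs_le]
    constructor
    · have := le_max_right S₁ (-S₀); linarith
    · exact le_trans h2 (le_max_left _ _)
  have h1 : ∫ x in (0:ℝ)..1, S₀ ≤ ∫ x in (0:ℝ)..1, f x := by
    apply intervalIntegral.integral_mono_on zero_le_one intervalIntegrable_const
      (intInt_of_bounded hmeas habs le_rfl zero_le_one le_rfl)
    intro x hx; exact (hbd x hx).1
  simpa using h1

set_option maxHeartbeats 2000000

theorem optimal_profile_continuous_at_junctions (S₀ S₁ x₀ x₁ q : ℝ)
    (hS₀ : 0 < S₀) (hS₀S₁ : S₀ ≤ S₁)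
    (hx₀ : 0 ≤ x₀) (hx₀x₁ : x₀ < x₁) (hx₁ : x₁ ≤ 1) (hq : 0 < q)
    (S : ℝ → ℝ)
    (hleft : ∀ x ∈ Set.Icc 0 x₀, S x = S₀)
    (hmid : ∀ x ∈ Set.Ioo x₀ x₁, S x = q / (1 - x))
    (hright : ∀ x ∈ Set.Icc x₁ 1, S x = S₁)
    (hmono : MonotoneOn S (Set.Icc 0 1))
    (hbound : ∀ x ∈ Set.Icc (0:ℝ) 1, S₀ ≤ S x ∧ S x ≤ S₁)
    (hmax : ∀ T : ℝ → ℝ, Measurable T →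
      (∀ x ∈ Set.Icc (0:ℝ) 1, S₀ ≤ T x ∧ T x ≤ S₁) →
      coolingFunctional T ≤ coolingFunctional S) :
    q = (1 - x₀) * S₀ ∧ q = (1 - x₁) * S₁ ∧ x₀ = 1 - q / S₀ ∧ x₁ = 1 - q / S₁ := by
  have hS₁pos : 0 < S₁ := lt_of_lt_of_le hS₀ hS₀S₁
  have hx₀1 : x₀ < 1 := lt_of_lt_of_le hx₀x₁ hx₁
  -- Step 1 : q ≤ (1 - x₁) * S₁  (from the upper bound on the middle segment)
  have hqx1le : q ≤ (1 - x₁) * S₁ := by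
    by_contra hcon
    push_neg at hcon
    have hd : 1 - q / S₁ < x₁ := by
      have : 1 - x₁ < q / S₁ := (lt_div_iff₀ hS₁pos).mpr (by linarith)
      linarith
    set x := max ((x₀ + x₁)/2) ((1 - q/S₁ + x₁)/2) with hxdef
    have hx_lt : x < x₁ := max_lt (by rw [hxdef] at *; linarith) (by linarith)
    have hx_gt : x₀ < x := lt_of_lt_of_le (by linarith) (le_max_left _ _)
    have hx_gt2 : 1 - q/S₁ < x := lt_of_lt_of_le (by linarith) (le_max_right _ _)
    have hxIcc : x ∈ Set.Icc (0:ℝ) 1 := ⟨le_trans hx₀ hx_gt.le, le_trans hx_lt.le hx₁⟩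
    have h1mx : 0 < 1 - x := by linarith [lt_of_lt_of_le hx_lt hx₁]
    have hb := (hbound x hxIcc).2
    rw [hmid x ⟨hx_gt, hx_lt⟩, div_le_iff₀ h1mx] at hb
    have h2 : 1 - x < q / S₁ := by linarith
    rw [lt_div_iff₀ hS₁pos] at h2
    linarith
  have hx₁lt1 : x₁ < 1 := by nlinarith
  have h1mx₁ : 0 < 1 - x₁ := by linarith
  -- Step 2 : (1 - x₀) * S₀ ≤ q
  have hqx0ge : (1 - x₀) * S₀ ≤ q := by
    by_contra hcon
    push_neg at hcon
    have hd : x₀ < 1 - q / S₀ := by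
      have : q / S₀ < 1 - x₀ := (div_lt_iff₀ hS₀).mpr (by linarith)
      linarith
    set x := min ((x₀ + x₁)/2) ((x₀ + (1 - q/S₀))/2) with hxdef
    have hx_gt : x₀ < x := lt_min (by linarith) (by linarith)
    have hx_lt : x < x₁ := lt_of_le_of_lt (min_le_left _ _) (by linarith)
    have hx_lt2 : x < 1 - q/S₀ := lt_of_le_of_lt (min_le_right _ _) (by linarith)
    have hxIcc : x ∈ Set.Icc (0:ℝ) 1 := ⟨le_trans hx₀ hx_gt.le, le_trans hx_lt.le hx₁⟩
    have h1mx : 0 < 1 - x := by linarith [lt_of_lt_of_le hx_lt hx₁]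
    have hb := (hbound x hxIcc).1
    rw [hmid x ⟨hx_gt, hx_lt⟩, le_div_iff₀ h1mx] at hb
    have h2 : q / S₀ < 1 - x := by linarith
    rw [div_lt_iff₀ hS₀] at h2
    linarith
  -- Step 3 : S₀ < S₁
  have hS01 : S₀ < S₁ := by
    set xa := x₀ + (x₁ - x₀)/3 with hxadef
    set xb := x₀ + 2*(x₁ - x₀)/3 with hxbdef
    have hxa : xa ∈ Set.Ioo x₀ x₁ := ⟨by rw [hxadef]; linarith, by rw [hxadef]; linarith⟩
    have hxb : xb ∈ Set.Ioo x₀ x₁ := ⟨by rw [hxbdef]; linarith, by rw [hxbdef]; linarith⟩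
    have h1 := (hbound xa ⟨by linarith [hxa.1], by linarith [hxa.2]⟩).1
    rw [hmid xa hxa] at h1
    have h2 := (hbound xb ⟨by linarith [hxb.1], by linarith [hxb.2]⟩).2
    rw [hmid xb hxb] at h2
    have hpb : 0 < 1 - xb := by linarith [hxb.2]
    have hlt : q / (1 - xa) < q / (1 - xb) := by
      apply div_lt_div_of_pos_left hq hpb
      rw [hxadef, hxbdef]; linarith
    linarith
  -- the explicit profile
  set base : ℝ → ℝ := fun x => if x ≤ x₀ then S₀ else if x < x₁ then q / (1 - x) else S₁
    with hbasedef
  clear_value base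
  have hbase_eq : Set.EqOn S base (Set.Icc 0 1) := by
    intro x hx
    simp only [hbasedef]
    by_cases h1 : x ≤ x₀
    · rw [if_pos h1]; exact hleft x ⟨hx.1, h1⟩
    · rw [if_neg h1]
      by_cases h2 : x < x₁
      · rw [if_pos h2]; exact hmid x ⟨not_le.mp h1, h2⟩
      · rw [if_neg h2]; exact hright x ⟨not_lt.mp h2, hx.2⟩
  have hbmeas : Measurable base := by
    rw [hbasedef]
    exact Measurable.ite measurableSet_Iic measurable_const
      (Measurable.ite measurableSet_Iio
        (measurable_const.div (measurable_const.sub measurable_id)) measurable_const)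
  have hbbd : ∀ x ∈ Set.Icc (0:ℝ) 1, S₀ ≤ base x ∧ base x ≤ S₁ := by
    intro x hx
    rw [← hbase_eq hx]
    exact hbound x hx
  have hbmid : ∀ x, x₀ < x → x < x₁ → base x = q / (1 - x) := by
    intro x h1 h2
    simp only [hbasedef]
    rw [if_neg (not_le.mpr h1), if_pos h2]
  have hbright : ∀ x, x₁ ≤ x → base x = S₁ := by
    intro x h1
    simp only [hbasedef]
    rw [if_neg (not_le.mpr (lt_of_lt_of_le hx₀x₁ h1)), if_neg (not_lt.mpr h1)]
  have hbleft : ∀ x, x ≤ x₀ → base x = S₀ := by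
    intro x h1
    simp only [hbasedef]
    rw [if_pos h1]
  have hFeq : coolingFunctional S = coolingFunctional base := by
    unfold coolingFunctional
    have hN : ∫ x in (0:ℝ)..1, S x = ∫ x in (0:ℝ)..1, base x := by
      apply intervalIntegral.integral_congr
      rw [Set.uIcc_of_le zero_le_one]
      exact hbase_eq
    have hD : ∫ x in (0:ℝ)..1, (1 - x) * (S x)^2
        = ∫ x in (0:ℝ)..1, (1 - x) * (base x)^2 := by
      apply intervalIntegral.integral_congr
      intro x hx
      rw [Set.uIcc_of_le zero_le_one] at hx
      show (1 - x) * (S x)^2 = (1 - x) * (base x)^2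
      rw [hbase_eq hx]
    rw [hN, hD]
  have hmax' : ∀ T : ℝ → ℝ, Measurable T →
      (∀ x ∈ Set.Icc (0:ℝ) 1, S₀ ≤ T x ∧ T x ≤ S₁) →
      coolingFunctional T ≤ coolingFunctional base := by
    intro T h1 h2
    rw [← hFeq]
    exact hmax T h1 h2
  have hNpos : 0 < ∫ x in (0:ℝ)..1, base x :=
    lt_of_lt_of_le hS₀ (cooling_N_lb S₀ S₁ base hbmeas hbbd)
  -- Step 4 : q = (1 - x₁) * S₁
  have hqx1 : q = (1 - x₁) * S₁ := by
    rcases eq_or_lt_of_le hqx1le with h | hcon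
    · exact h
    exfalso
    have hqd : q / (1 - x₁) < S₁ := (div_lt_iff₀ h1mx₁).mpr (by linarith)
    -- C1 : raise the middle profile near x₁
    obtain ⟨u1, hu1a, hu1b⟩ : ∃ u, x₀ < u ∧ u < x₁ :=
      ⟨(x₀ + x₁)/2, by linarith, by linarith⟩
    have h0u1 : 0 ≤ u1 := le_trans hx₀ hu1a.le
    have hadm1 : ∀ e : ℝ, 0 < e → e ≤ S₁ - q / (1 - x₁) → ∀ x ∈ Set.Ioo u1 x₁,
        S₀ ≤ base x + 1 * e ∧ base x + 1 * e ≤ S₁ := by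
      intro e he he' x hx
      have hxIcc : x ∈ Set.Icc (0:ℝ) 1 := ⟨le_trans h0u1 hx.1.le, le_trans hx.2.le hx₁⟩
      have hbx : base x = q / (1 - x) := hbmid x (lt_trans hu1a hx.1) hx.2
      have h1mx : 0 < 1 - x := by linarith [hx.2, hx₁lt1]
      constructor
      · have := (hbbd x hxIcc).1; linarith
      · rw [hbx]
        have hcmp : q / (1 - x) ≤ q / (1 - x₁) := by
          rw [div_le_div_iff₀ h1mx h1mx₁]
          nlinarith [hx.2]
        linarith
    have hkey1 := key_ineq' S₀ S₁ hS₀ hS₀S₁ base hbmeas hbbd u1 x₁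
      (S₁ - q / (1 - x₁)) 1 h0u1 hu1b hx₁ (by linarith) (Or.inl rfl) hadm1 hmax'
    have hM1 : ∫ x in u1..x₁, (1 - x) * base x = q * (x₁ - u1) := by
      have h' : ∫ x in u1..x₁, (1 - x) * base x = ∫ x in u1..x₁, q := by
        apply intervalIntegral.integral_congr_ae
        filter_upwards [ae_ne x₁] with x hne hx
        rw [Set.uIoc_of_le hu1b.le] at hx
        have hxo : x₀ < x := lt_trans hu1a hx.1
        have hxlt : x < x₁ := lt_of_le_of_ne hx.2 hne
        rw [hbmid x hxo hxlt]
        have h1mx : (1:ℝ) - x ≠ 0 := by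
          have : x < 1 := lt_trans hxlt hx₁lt1
          intro hc; linarith [sub_eq_zero.mp hc]
        field_simp
      rw [h', intervalIntegral.integral_const, smul_eq_mul, mul_comm]
    rw [hM1] at hkey1
    have hC1 : (∫ x in (0:ℝ)..1, (1 - x) * (base x)^2) ≤ (∫ x in (0:ℝ)..1, base x) * q := by
      have hl1 : 0 < x₁ - u1 := by linarith
      have h6 : (x₁ - u1) * (∫ x in (0:ℝ)..1, (1 - x) * (base x)^2)
          ≤ (x₁ - u1) * ((∫ x in (0:ℝ)..1, base x) * q) := by linarith [hkey1]
      exact (mul_le_mul_iff_right₀ hl1).mp h6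
    -- C2 : lower the right constant just after x₁
    have hd2 : x₁ < 1 - q/S₁ := by
      have : q / S₁ < 1 - x₁ := (div_lt_iff₀ hS₁pos).mpr (by linarith)
      linarith
    obtain ⟨b2, hb2a, hb2b, hb2c⟩ : ∃ b, x₁ < b ∧ b ≤ 1 ∧ q / S₁ < 1 - b := by
      refine ⟨(x₁ + (1 - q/S₁))/2, by linarith, ?_, by linarith⟩
      have : q / S₁ > 0 := div_pos hq hS₁pos
      linarith
    have h0x₁ : (0:ℝ) ≤ x₁ := le_trans hx₀ hx₀x₁.le
    have hadm2 : ∀ e : ℝ, 0 < e → e ≤ S₁ - S₀ → ∀ x ∈ Set.Ioo x₁ b2,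
        S₀ ≤ base x + (-1) * e ∧ base x + (-1) * e ≤ S₁ := by
      intro e he he' x hx
      rw [hbright x hx.1.le]
      constructor <;> linarith
    have hkey2 := key_ineq' S₀ S₁ hS₀ hS₀S₁ base hbmeas hbbd x₁ b2
      (S₁ - S₀) (-1) h0x₁ hb2a hb2b (by linarith) (Or.inr rfl) hadm2 hmax'
    have hM2 : ∫ x in x₁..b2, (1 - x) * base x
        = S₁ * ((b2 - x₁) * (1 - (x₁ + b2)/2)) := by
      have h' : ∫ x in x₁..b2, (1 - x) * base x = ∫ x in x₁..b2, (1 - x) * S₁ := by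
        apply intervalIntegral.integral_congr_ae
        filter_upwards with x hx
        rw [Set.uIoc_of_le hb2a.le] at hx
        rw [hbright x hx.1.le]
      rw [h', intervalIntegral.integral_mul_const, integral_one_sub]
      ring
    rw [hM2] at hkey2
    -- contradiction
    have hl2 : 0 < b2 - x₁ := by linarith
    have hqS : q < S₁ * (1 - (x₁ + b2)/2) := by
      have h1 : q < S₁ * (1 - b2) := by
        rw [div_lt_iff₀ hS₁pos] at hb2c
        linarith
      nlinarith [h1, mul_nonneg hS₁pos.le (by linarith : (0:ℝ) ≤ b2 - x₁)]
    have h6 : (∫ x in (0:ℝ)..1, base x) * (S₁ * ((b2 - x₁) * (1 - (x₁ + b2)/2)))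
        ≤ (b2 - x₁) * (∫ x in (0:ℝ)..1, (1 - x) * (base x)^2) := by linarith [hkey2]
    have h7 : (b2 - x₁) * (∫ x in (0:ℝ)..1, (1 - x) * (base x)^2)
        ≤ (b2 - x₁) * ((∫ x in (0:ℝ)..1, base x) * q) :=
      mul_le_mul_of_nonneg_left hC1 hl2.le
    have h8 : (b2 - x₁) * ((∫ x in (0:ℝ)..1, base x) * q)
        < (b2 - x₁) * ((∫ x in (0:ℝ)..1, base x) * (S₁ * (1 - (x₁ + b2)/2))) :=
      mul_lt_mul_of_pos_left (mul_lt_mul_of_pos_left hqS hNpos) hl2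
    linarith [h6, h7, h8]
  -- Step 5 : q = (1 - x₀) * S₀
  have hqx0 : q = (1 - x₀) * S₀ := by
    rcases eq_or_lt_of_le hqx0ge with h | hcon
    · exact h.symm
    exfalso
    have h1mx₀ : 0 < 1 - x₀ := by linarith
    have hqd : S₀ < q / (1 - x₀) := (lt_div_iff₀ h1mx₀).mpr (by linarith)
    rcases eq_or_lt_of_le hx₀ with hx₀0 | hx₀pos
    · -- degenerate case x₀ = 0 : global comparison with the continuous profile
      have hq0 : S₀ < q := by
        rw [← hx₀0] at hcon
        linarith
      have hqS₁ : q < S₁ := by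
        have hx₁pos : 0 < x₁ := by rw [hx₀0]; exact hx₀x₁
        nlinarith [hqx1, hS₁pos]
      -- base agrees a.e. with auxP S₁ q on (0,1)
      have hx1eq : 1 - q / S₁ = x₁ := by
        rw [hqx1]
        field_simp
        ring
      have hNq : ∫ x in (0:ℝ)..1, base x = ∫ x in (0:ℝ)..1, auxP S₁ q x := by
        apply intervalIntegral.integral_congr_ae
        filter_upwards with x hx
        rw [Set.uIoc_of_le zero_le_one] at hx
        have hx0 : ¬ x ≤ x₀ := by rw [← hx₀0]; exact not_le.mpr hx.1
        unfold auxP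
        rw [hx1eq]
        by_cases h2 : x < x₁
        · rw [hbmid x (not_le.mp hx0) h2, if_pos h2]
        · rw [hbright x (not_lt.mp h2), if_neg h2]
      have hDq : ∫ x in (0:ℝ)..1, (1 - x) * (base x)^2
          = ∫ x in (0:ℝ)..1, (1 - x) * (auxP S₁ q x)^2 := by
        apply intervalIntegral.integral_congr_ae
        filter_upwards with x hx
        rw [Set.uIoc_of_le zero_le_one] at hx
        have hx0 : ¬ x ≤ x₀ := by rw [← hx₀0]; exact not_le.mpr hx.1
        unfold auxP
        rw [hx1eq]
        by_cases h2 : x < x₁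
        · rw [hbmid x (not_le.mp hx0) h2, if_pos h2]
        · rw [hbright x (not_lt.mp h2), if_neg h2]
      have hPq := auxP_integrals S₁ q hq hqS₁.le
      have hPS := auxP_integrals S₁ S₀ hS₀ hS₀S₁
      have hcomp := hmax' (auxP S₁ S₀) (auxP_meas S₁ S₀)
        (by
          intro x hx
          have := auxP_bd S₁ S₀ hS₀ hS₀S₁ x hx
          exact ⟨this.1, this.2⟩)
      unfold coolingFunctional at hcomp
      rw [hNq, hDq, hPq.1, hPq.2, hPS.1, hPS.2] at hcomp
      set L := Real.log (S₁ / q) with hLdef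
      set L' := Real.log (S₁ / S₀) with hL'def
      clear_value L L'
      have hLpos : 0 < L := by
        rw [hLdef]; exact Real.log_pos ((one_lt_div hq).mpr hqS₁)
      have hLL' : L < L' := by
        rw [hLdef, hL'def]
        apply Real.log_lt_log (div_pos hS₁pos hq)
        apply div_lt_div_of_pos_left hS₁pos hS₀ hq0
      have hDenq : 0 < q^2 * (L + 1/2) := by positivity
      have hDenS : 0 < S₀^2 * (L' + 1/2) := by
        have : 0 < L' := lt_trans hLpos hLL'
        positivity
      rw [div_le_div_iff₀ hDenS hDenq] at hcomp
      have hkey2 : (L+1)^2 * (L'+1/2) < (L'+1)^2 * (L+1/2) := by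
        nlinarith [mul_pos (sub_pos.mpr hLL') (by nlinarith : (0:ℝ) < L'*L + (L'+L)/2)]
      have he1 : 1 / 2 * (S₀ * (L' + 1)) ^ 2 * (q ^ 2 * (L + 1 / 2))
          = (S₀^2 * q^2 / 2) * ((L'+1)^2 * (L+1/2)) := by ring
      have he2 : 1 / 2 * (q * (L + 1)) ^ 2 * (S₀ ^ 2 * (L' + 1 / 2))
          = (S₀^2 * q^2 / 2) * ((L+1)^2 * (L'+1/2)) := by ring
      rw [he1, he2] at hcomp
      have h11 := mul_lt_mul_of_pos_left hkey2
        (show (0:ℝ) < S₀^2 * q^2 / 2 by positivity)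
      linarith [hcomp, h11]
    · -- main case x₀ > 0 : local perturbations at x₀
      -- A : raise the left constant just before x₀
      have hdA : 1 - q / S₀ < x₀ := by
        have : 1 - x₀ < q / S₀ := (lt_div_iff₀ hS₀).mpr (by linarith)
        linarith
      obtain ⟨a, haA, haB, hS0a⟩ : ∃ a, 0 ≤ a ∧ a < x₀ ∧ S₀ * (1 - a) < q := by
        refine ⟨max 0 ((x₀ + (1 - q/S₀))/2), le_max_left _ _, max_lt hx₀pos (by linarith), ?_⟩
        rcases le_or_gt ((x₀ + (1 - q/S₀))/2) 0 with h | h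
        · rw [max_eq_left h]
          have h1 : 1 + x₀ ≤ q / S₀ := by linarith
          have h2 := (le_div_iff₀ hS₀).mp h1
          nlinarith
        · rw [max_eq_right h.le]
          have h1 : 1 - (x₀ + (1 - q/S₀))/2 < q / S₀ := by linarith
          rw [lt_div_iff₀ hS₀] at h1
          linarith
      have hadmA : ∀ e : ℝ, 0 < e → e ≤ S₁ - S₀ → ∀ x ∈ Set.Ioo a x₀,
          S₀ ≤ base x + 1 * e ∧ base x + 1 * e ≤ S₁ := by
        intro e he he' x hx
        rw [hbleft x hx.2.le]
        constructor <;> linarith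
      have hkeyA := key_ineq' S₀ S₁ hS₀ hS₀S₁ base hbmeas hbbd a x₀
        (S₁ - S₀) 1 haA haB hx₀1.le (by linarith) (Or.inl rfl) hadmA hmax'
      have hMA : ∫ x in a..x₀, (1 - x) * base x
          = S₀ * ((x₀ - a) * (1 - (a + x₀)/2)) := by
        have h' : ∫ x in a..x₀, (1 - x) * base x = ∫ x in a..x₀, (1 - x) * S₀ := by
          apply intervalIntegral.integral_congr_ae
          filter_upwards with x hx
          rw [Set.uIoc_of_le haB.le] at hx
          rw [hbleft x hx.2]
        rw [h', intervalIntegral.integral_mul_const, integral_one_sub]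
        ring
      rw [hMA] at hkeyA
      have hlA : 0 < x₀ - a := by linarith
      have hDleA : (∫ x in (0:ℝ)..1, (1 - x) * (base x)^2)
          < (∫ x in (0:ℝ)..1, base x) * q := by
        have h6 : (x₀ - a) * (∫ x in (0:ℝ)..1, (1 - x) * (base x)^2)
            ≤ (x₀ - a) * ((∫ x in (0:ℝ)..1, base x) * (S₀ * (1 - (a + x₀)/2))) := by
          linarith [hkeyA]
        have h7 : (∫ x in (0:ℝ)..1, (1 - x) * (base x)^2)
            ≤ (∫ x in (0:ℝ)..1, base x) * (S₀ * (1 - (a + x₀)/2)) :=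
          (mul_le_mul_iff_right₀ hlA).mp h6
        have h8 : S₀ * (1 - (a + x₀)/2) ≤ S₀ * (1 - a) := by nlinarith [hS₀, haB]
        have h9 : (∫ x in (0:ℝ)..1, base x) * (S₀ * (1 - (a + x₀)/2))
            ≤ (∫ x in (0:ℝ)..1, base x) * (S₀ * (1 - a)) :=
          mul_le_mul_of_nonneg_left h8 hNpos.le
        have h10 : (∫ x in (0:ℝ)..1, base x) * (S₀ * (1 - a))
            < (∫ x in (0:ℝ)..1, base x) * q := mul_lt_mul_of_pos_left hS0a hNpos
        linarith
      -- B : lower the middle profile just after x₀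
      obtain ⟨bB, hbBa, hbBb⟩ : ∃ b, x₀ < b ∧ b < x₁ :=
        ⟨(x₀ + x₁)/2, by linarith, by linarith⟩
      have hbB1 : bB ≤ 1 := le_trans hbBb.le hx₁
      have hadmB : ∀ e : ℝ, 0 < e → e ≤ q / (1 - x₀) - S₀ → ∀ x ∈ Set.Ioo x₀ bB,
          S₀ ≤ base x + (-1) * e ∧ base x + (-1) * e ≤ S₁ := by
        intro e he he' x hx
        have hxIcc : x ∈ Set.Icc (0:ℝ) 1 := ⟨le_trans hx₀ hx.1.le, le_trans hx.2.le hbB1⟩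
        have hbx : base x = q / (1 - x) := hbmid x hx.1 (lt_trans hx.2 hbBb)
        have h1mx : 0 < 1 - x := by linarith [lt_of_lt_of_le (lt_trans hx.2 hbBb) hx₁]
        constructor
        · rw [hbx]
          have hcmp : q / (1 - x₀) ≤ q / (1 - x) := by
            rw [div_le_div_iff₀ h1mx₀ h1mx]
            nlinarith [hx.1]
          linarith
        · have := (hbbd x hxIcc).2; linarith
      have hkeyB := key_ineq' S₀ S₁ hS₀ hS₀S₁ base hbmeas hbbd x₀ bB
        (q / (1 - x₀) - S₀) (-1) hx₀ hbBa hbB1 (by linarith) (Or.inr rfl) hadmB hmax'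
      have hMB : ∫ x in x₀..bB, (1 - x) * base x = q * (bB - x₀) := by
        have h' : ∫ x in x₀..bB, (1 - x) * base x = ∫ x in x₀..bB, q := by
          apply intervalIntegral.integral_congr_ae
          filter_upwards with x hx
          rw [Set.uIoc_of_le hbBa.le] at hx
          rw [hbmid x hx.1 (lt_of_le_of_lt hx.2 hbBb)]
          have h1mx : (1:ℝ) - x ≠ 0 := by
            have : x < 1 := lt_of_le_of_lt hx.2 (lt_of_lt_of_le hbBb hx₁)
            intro hc; linarith [sub_eq_zero.mp hc]
          field_simp
        rw [h', intervalIntegral.integral_const, smul_eq_mul, mul_comm]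
      rw [hMB] at hkeyB
      have hlB : 0 < bB - x₀ := by linarith
      have h6 : (bB - x₀) * ((∫ x in (0:ℝ)..1, base x) * q)
          ≤ (bB - x₀) * (∫ x in (0:ℝ)..1, (1 - x) * (base x)^2) := by
        linarith [hkeyB]
      have hDgeB : (∫ x in (0:ℝ)..1, base x) * q
          ≤ (∫ x in (0:ℝ)..1, (1 - x) * (base x)^2) := (mul_le_mul_iff_right₀ hlB).mp h6
      linarith
  refine ⟨hqx0, hqx1, ?_, ?_⟩
  · rw [hqx0]
    field_simp
    ring
  · rw [hqx1]
    field_simp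
    ring
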